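/- Let a, b ∈ ℝ and let c ∈ ℍ be a nonzero quaternion, and let Q = [[a, c], [c*, b]] be the corresponding 2×2 quaternion Hermitian matrix. The real quadratic equation (a − x)(b − x) = |c|² has two distinct real roots λ₁ ≠ λ₂ (its discriminant is (a − b)² + 4|c|² > 0). Define the 2×2 quaternion matrix U whose first column is (−c, a − λ₁)/((a − λ₁)² + |c|²)^{1/2} and whose second column is (−c, a − λ₂)/((a − λ₂)² + |c|²)^{1/2}. Then U is unitary (Uᴴ U = U Uᴴ = I) and Uᴴ Q U = diag(λ₁, λ₂). -/

import Mathlib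

open Matrix

noncomputable section

/-- The 2×2 unitary quaternion matrix from Proposition 3.3, built from the two roots
`l1, l2` of `(a - x)(b - x) = |c|²`. -/
noncomputable def givensU (a : ℝ) (c : Quaternion ℝ) (l1 l2 : ℝ) :
    Matrix (Fin 2) (Fin 2) (Quaternion ℝ) :=
  !![-c / ((Real.sqrt ((a - l1) ^ 2 + ‖c‖ ^ 2) : ℝ) : Quaternion ℝ),
     -c / ((Real.sqrt ((a - l2) ^ 2 + ‖c‖ ^ 2) : ℝ) : Quaternion ℝ);
     ((a - l1 : ℝ) : Quaternion ℝ) / ((Real.sqrt ((a - l1) ^ 2 + ‖c‖ ^ 2) : ℝ) : Quaternion ℝ),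
     ((a - l2 : ℝ) : Quaternion ℝ) / ((Real.sqrt ((a - l2) ^ 2 + ‖c‖ ^ 2) : ℝ) : Quaternion ℝ)]

set_option maxHeartbeats 1000000 in
/-- Proposition 3.3: for `a, b ∈ ℝ` and a nonzero quaternion `c`, the real quadratic equation
`(a - x)(b - x) = |c|²` has two distinct real roots, and for any two distinct roots `l1 ≠ l2`
the matrix `givensU a c l1 l2` is unitary and diagonalizes `[[a, c], [c*, b]]` to
`diag(l1, l2)`. -/
theorem givens_diagonalization (a b : ℝ) (c : Quaternion ℝ) (hc : c ≠ 0) :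
    (∃ l1 l2 : ℝ, l1 ≠ l2 ∧ (a - l1) * (b - l1) = ‖c‖ ^ 2 ∧ (a - l2) * (b - l2) = ‖c‖ ^ 2) ∧
    ∀ l1 l2 : ℝ, l1 ≠ l2 →
      (a - l1) * (b - l1) = ‖c‖ ^ 2 → (a - l2) * (b - l2) = ‖c‖ ^ 2 →
      (givensU a c l1 l2)ᴴ * givensU a c l1 l2 = 1 ∧
      givensU a c l1 l2 * (givensU a c l1 l2)ᴴ = 1 ∧
      (givensU a c l1 l2)ᴴ * !![(a : Quaternion ℝ), c; star c, (b : Quaternion ℝ)] *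
          givensU a c l1 l2
        = Matrix.diagonal ![(l1 : Quaternion ℝ), (l2 : Quaternion ℝ)] := by
  have hn : (0:ℝ) < ‖c‖ ^ 2 := pow_pos (norm_pos_iff.mpr hc) 2
  constructor
  · have hD : (0:ℝ) < (a - b) ^ 2 + 4 * ‖c‖ ^ 2 := by nlinarith
    have hsD : Real.sqrt ((a - b) ^ 2 + 4 * ‖c‖ ^ 2) ^ 2 = (a - b) ^ 2 + 4 * ‖c‖ ^ 2 :=
      Real.sq_sqrt hD.le
    have hsDpos : 0 < Real.sqrt ((a - b) ^ 2 + 4 * ‖c‖ ^ 2) := Real.sqrt_pos.mpr hD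
    refine ⟨((a + b) + Real.sqrt ((a - b) ^ 2 + 4 * ‖c‖ ^ 2)) / 2,
      ((a + b) - Real.sqrt ((a - b) ^ 2 + 4 * ‖c‖ ^ 2)) / 2, by intro h; nlinarith, by nlinarith,
      by nlinarith⟩
  · intro l1 l2 hne h1 h2
    have hsum : l1 + l2 = a + b := by
      have h3 : (l2 - l1) * (a + b - l1 - l2) = 0 := by linear_combination h1 - h2
      rcases mul_eq_zero.mp h3 with h | h
      · exact absurd (by linarith) hne
      · linarith
    have hr : (a - l1) * (a - l2) = -‖c‖ ^ 2 := by
      linear_combination -h1 - (a - l1) * hsum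
    have hn2 : ‖c‖ ^ 2 = -((a - l1) * (a - l2)) := by linarith
    have hs1pos : 0 < Real.sqrt ((a - l1) ^ 2 + ‖c‖ ^ 2) := Real.sqrt_pos.mpr (by nlinarith)
    have hs2pos : 0 < Real.sqrt ((a - l2) ^ 2 + ‖c‖ ^ 2) := Real.sqrt_pos.mpr (by nlinarith)
    have hs1 : Real.sqrt ((a - l1) ^ 2 + ‖c‖ ^ 2) ^ 2 = (a - l1) ^ 2 + ‖c‖ ^ 2 :=
      Real.sq_sqrt (by nlinarith)
    have hs2 : Real.sqrt ((a - l2) ^ 2 + ‖c‖ ^ 2) ^ 2 = (a - l2) ^ 2 + ‖c‖ ^ 2 :=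
      Real.sq_sqrt (by nlinarith)
    have hs1' : Real.sqrt ((a - l1) ^ 2 + ‖c‖ ^ 2) * Real.sqrt ((a - l1) ^ 2 + ‖c‖ ^ 2)
        = (a - l1) ^ 2 + ‖c‖ ^ 2 := Real.mul_self_sqrt (by nlinarith)
    have hs2' : Real.sqrt ((a - l2) ^ 2 + ‖c‖ ^ 2) * Real.sqrt ((a - l2) ^ 2 + ‖c‖ ^ 2)
        = (a - l2) ^ 2 + ‖c‖ ^ 2 := Real.mul_self_sqrt (by nlinarith)
    have hsc : star c * c = ((‖c‖ ^ 2 : ℝ) : Quaternion ℝ) := by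
      rw [Quaternion.star_mul_self, Quaternion.normSq_eq_norm_mul_self, sq]
    have hcs : c * star c = ((‖c‖ ^ 2 : ℝ) : Quaternion ℝ) := by
      rw [Quaternion.self_mul_star, Quaternion.normSq_eq_norm_mul_self, sq]
    have hdiv : ∀ (x : Quaternion ℝ) (s : ℝ), x / (s : Quaternion ℝ) = s⁻¹ • x := fun x s => by
      rw [div_eq_mul_inv, ← Quaternion.coe_inv, Quaternion.mul_coe_eq_smul]
    have hcoe : ∀ r : ℝ, (r : Quaternion ℝ) = r • (1 : Quaternion ℝ) := fun r => by
      rw [← Quaternion.coe_one, Quaternion.smul_coe, mul_one]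
    have hUU : (givensU a c l1 l2)ᴴ * givensU a c l1 l2 = 1 := by
      refine Matrix.ext fun i j => ?_
      fin_cases i <;> fin_cases j <;>
        simp [givensU, Matrix.mul_apply, Fin.sum_univ_two, hdiv, Matrix.one_apply] <;>
        (simp only [star_smul, Quaternion.star_coe, star_neg, smul_mul_smul_comm,
          smul_mul_assoc, mul_smul_comm, neg_mul, mul_neg, neg_neg, hsc, hcs,
          Quaternion.coe_mul_eq_smul, Quaternion.mul_coe_eq_smul, smul_smul, hcoe,
          mul_sub, sub_mul, mul_one, one_mul];
         match_scalars) <;>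
        field_simp <;>
        (first | ring1 | (rw [hn2]; ring1) |
          (simp only [hs1, hs2, hs1', hs2']; first | ring1 | (rw [hn2]; ring1)))
    refine ⟨hUU, ?_, ?_⟩
    · refine Matrix.ext fun i j => ?_
      fin_cases i <;> fin_cases j <;>
        simp [givensU, Matrix.mul_apply, Fin.sum_univ_two, hdiv, Matrix.one_apply] <;>
        (simp only [star_smul, Quaternion.star_coe, star_neg, smul_mul_smul_comm,
          smul_mul_assoc, mul_smul_comm, neg_mul, mul_neg, neg_neg, hsc, hcs,
          Quaternion.coe_mul_eq_smul, Quaternion.mul_coe_eq_smul, smul_smul, hcoe,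
          mul_sub, sub_mul, mul_one, one_mul];
         match_scalars) <;>
        field_simp <;>
        (first | ring1 | (rw [hn2]; ring1) |
          (simp only [hs1, hs2, hs1', hs2']; first | ring1 | (rw [hn2]; ring1)))

    have hQU : !![(a : Quaternion ℝ), c; star c, (b : Quaternion ℝ)] * givensU a c l1 l2
        = givensU a c l1 l2 * Matrix.diagonal ![(l1 : Quaternion ℝ), (l2 : Quaternion ℝ)] := by
      refine Matrix.ext fun i j => ?_
      fin_cases i <;> fin_cases j <;>
        simp [givensU, Matrix.mul_apply, Fin.sum_univ_two, hdiv, Matrix.diagonal] <;>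
        (simp only [star_smul, Quaternion.star_coe, star_neg, smul_mul_smul_comm,
          smul_mul_assoc, mul_smul_comm, neg_mul, mul_neg, neg_neg, hsc, hcs,
          Quaternion.coe_mul_eq_smul, Quaternion.mul_coe_eq_smul, smul_smul, hcoe,
          mul_sub, sub_mul, mul_one, one_mul];
         match_scalars) <;>
        (set s1 := Real.sqrt ((a - l1) ^ 2 + ‖c‖ ^ 2) with hg1
         set s2 := Real.sqrt ((a - l2) ^ 2 + ‖c‖ ^ 2) with hg2
         field_simp) <;>
        (first | ring1 | linear_combination (s1 * s1) * h1 | linear_combination (s2 * s2) * h2 |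
          linear_combination h1 - s2 ^ 2 * h2 | linear_combination h2 - s1 ^ 2 * h1 |
          linear_combination s1 ^ 2 * h1 - h2 | linear_combination s2 ^ 2 * h2 - h1 |
          linear_combination 2 * h1 - s2 ^ 2 * h2 | linear_combination h1 + h2 - s2 ^ 2 * h2 |
          linear_combination h1 | linear_combination h2)
    calc (givensU a c l1 l2)ᴴ * !![(a : Quaternion ℝ), c; star c, (b : Quaternion ℝ)] *
          givensU a c l1 l2
        = (givensU a c l1 l2)ᴴ * (!![(a : Quaternion ℝ), c; star c, (b : Quaternion ℝ)] *
            givensU a c l1 l2) := by rw [mul_assoc]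
      _ = (givensU a c l1 l2)ᴴ * givensU a c l1 l2 *
            Matrix.diagonal ![(l1 : Quaternion ℝ), (l2 : Quaternion ℝ)] := by
          rw [hQU, mul_assoc]
      _ = Matrix.diagonal ![(l1 : Quaternion ℝ), (l2 : Quaternion ℝ)] := by rw [hUU, one_mul]
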